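/- Let M > 0, set r₊ = 2M and μ(r) = 1 − 2M/r. For every C¹ function φ : [r₊, r'] → ℂ (with r' > r₊) there is a universal constant C (independent of φ, r', M) such that ∫_{r₊}^{r'} |φ(r)|² dr ≤ C ( ∫_{r₊}^{r'} μ(r)² r² |φ'(r)|² dr + (r' − r₊) |φ(r')|² ). -/

import Mathlib

/-- Hardy inequality near the Schwarzschild horizon: there is a universal constant `C`
(independent of `M`, `r'` and `φ`) such that for every mass `M > 0`, every `r' > 2M`
(with `r₊ = 2M` and `μ(r) = 1 − 2M/r`) and every `C¹` function `φ : [r₊, r'] → ℂ`,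
`∫_{r₊}^{r'} |φ(r)|² dr ≤ C ( ∫_{r₊}^{r'} μ(r)² r² |φ'(r)|² dr + (r' − r₊) |φ(r')|² )`. -/
theorem hardy_inequality_horizon :
    ∃ C : ℝ, 0 < C ∧ ∀ (M r' : ℝ) (φ φ' : ℝ → ℂ),
      0 < M → 2 * M < r' →
      (∀ r ∈ Set.Icc (2 * M) r', HasDerivAt φ (φ' r) r) →
      ContinuousOn φ' (Set.Icc (2 * M) r') →
      ∫ r in (2 * M)..r', ‖φ r‖ ^ 2
        ≤ C * ((∫ r in (2 * M)..r', (1 - 2 * M / r) ^ 2 * r ^ 2 * ‖φ' r‖ ^ 2)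
            + (r' - 2 * M) * ‖φ r'‖ ^ 2) := by
  refine ⟨4, by norm_num, ?_⟩
  intro M r' φ φ' hM hr hφ hφ'c
  have hle : 2 * M ≤ r' := hr.le
  have huIcc : Set.uIcc (2 * M) r' = Set.Icc (2 * M) r' := Set.uIcc_of_le hle
  have hφc : ContinuousOn φ (Set.Icc (2 * M) r') := fun x hx =>
    (hφ x hx).continuousAt.continuousWithinAt
  set E : ℝ → ℝ := fun r => (φ r).re * (φ' r).re + (φ r).im * (φ' r).im with hE
  have hEc : ContinuousOn E (Set.Icc (2 * M) r') := by
    exact ((Complex.continuous_re.comp_continuousOn hφc).mul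
        (Complex.continuous_re.comp_continuousOn hφ'c)).add
      ((Complex.continuous_im.comp_continuousOn hφc).mul
        (Complex.continuous_im.comp_continuousOn hφ'c))
  -- derivative of ‖φ‖²
  have hnsq : ∀ r ∈ Set.Icc (2 * M) r',
      HasDerivAt (fun r => ‖φ r‖ ^ 2) (2 * E r) r := by
    intro r hrm
    have hre : HasDerivAt (fun r => (φ r).re) ((φ' r).re) r :=
      Complex.reCLM.hasFDerivAt.comp_hasDerivAt r (hφ r hrm)
    have him : HasDerivAt (fun r => (φ r).im) ((φ' r).im) r :=
      Complex.imCLM.hasFDerivAt.comp_hasDerivAt r (hφ r hrm)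
    have key := (hre.mul hre).add (him.mul him)
    have heq : (fun r => ‖φ r‖ ^ 2)
        = fun r => (φ r).re * (φ r).re + (φ r).im * (φ r).im := by
      funext x
      rw [← Complex.normSq_apply, Complex.normSq_eq_norm_sq]
    rw [heq]
    exact key.congr_deriv (by simp only [hE]; ring)
  -- derivative of g r = (r - 2M) * ‖φ r‖²
  set h : ℝ → ℝ := fun r => ‖φ r‖ ^ 2 + (r - 2 * M) * (2 * E r) with hh
  have hg : ∀ r ∈ Set.Icc (2 * M) r',
      HasDerivAt (fun r => (r - 2 * M) * ‖φ r‖ ^ 2) (h r) r := by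
    intro r hrm
    have := ((hasDerivAt_id r).sub_const (2 * M)).mul (hnsq r hrm)
    exact this.congr_deriv (by simp only [hh, id_eq]; ring)
  -- continuity / integrability
  have hnc : ContinuousOn (fun r => ‖φ r‖ ^ 2) (Set.Icc (2 * M) r') := (hφc.norm).pow 2
  have hhc : ContinuousOn h (Set.Icc (2 * M) r') := by
    exact hnc.add (((continuousOn_id.sub continuousOn_const)).mul (continuousOn_const.mul hEc))
  have hwc : ContinuousOn (fun r => (r - 2 * M) ^ 2 * ‖φ' r‖ ^ 2) (Set.Icc (2 * M) r') := by
    exact ((continuousOn_id.sub continuousOn_const).pow 2).mul ((hφ'c.norm).pow 2)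
  have hnI : IntervalIntegrable (fun r => ‖φ r‖ ^ 2) MeasureTheory.volume (2 * M) r' :=
    (huIcc ▸ hnc).intervalIntegrable
  have hhI : IntervalIntegrable h MeasureTheory.volume (2 * M) r' :=
    (huIcc ▸ hhc).intervalIntegrable
  have hwI : IntervalIntegrable (fun r => (r - 2 * M) ^ 2 * ‖φ' r‖ ^ 2)
      MeasureTheory.volume (2 * M) r' := (huIcc ▸ hwc).intervalIntegrable
  -- FTC
  have hFTC : ∫ r in (2 * M)..r', h r = (r' - 2 * M) * ‖φ r'‖ ^ 2 := by
    have := intervalIntegral.integral_eq_sub_of_hasDerivAt (f := fun r => (r - 2 * M) * ‖φ r‖ ^ 2)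
      (fun r hrm => hg r (huIcc ▸ hrm)) hhI
    simpa using this
  -- pointwise bound
  have hpt : ∀ r ∈ Set.Icc (2 * M) r',
      ‖φ r‖ ^ 2 ≤ 2 * h r + 4 * ((r - 2 * M) ^ 2 * ‖φ' r‖ ^ 2) := by
    intro r hrm
    have h1 : |E r| ≤ ‖φ r‖ * ‖φ' r‖ := by
      have heq : E r = ((starRingEnd ℂ) (φ r) * φ' r).re := by
        simp [hE, Complex.mul_re]
      have h2 : |((starRingEnd ℂ) (φ r) * φ' r).re|
          ≤ ‖(starRingEnd ℂ) (φ r) * φ' r‖ := Complex.abs_re_le_norm _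
      rw [norm_mul, Complex.norm_conj] at h2
      rw [heq]
      simpa using h2
    have h3 := abs_le.mp h1
    have h4 : 0 ≤ r - 2 * M := by linarith [hrm.1]
    simp only [hh]
    nlinarith [sq_nonneg (‖φ r‖ - 2 * (r - 2 * M) * ‖φ' r‖), norm_nonneg (φ r),
      norm_nonneg (φ' r), mul_le_mul_of_nonneg_left h3.1 h4]
  -- integrate
  have hmono : ∫ r in (2 * M)..r', ‖φ r‖ ^ 2
      ≤ ∫ r in (2 * M)..r', (2 * h r + 4 * ((r - 2 * M) ^ 2 * ‖φ' r‖ ^ 2)) := by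
    apply intervalIntegral.integral_mono_on hle hnI
    · exact ((hhI.const_mul 2).add (hwI.const_mul 4))
    · exact hpt
  rw [intervalIntegral.integral_add (hhI.const_mul 2) (hwI.const_mul 4),
    intervalIntegral.integral_const_mul, intervalIntegral.integral_const_mul, hFTC] at hmono
  -- identify the weight
  have hW : ∫ r in (2 * M)..r', (1 - 2 * M / r) ^ 2 * r ^ 2 * ‖φ' r‖ ^ 2
      = ∫ r in (2 * M)..r', (r - 2 * M) ^ 2 * ‖φ' r‖ ^ 2 := by
    apply intervalIntegral.integral_congr
    intro r hrm
    rw [huIcc] at hrm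
    have hr0 : r ≠ 0 := by nlinarith [hrm.1]
    have : (1 - 2 * M / r) ^ 2 * r ^ 2 = (r - 2 * M) ^ 2 := by
      field_simp
    show (1 - 2 * M / r) ^ 2 * r ^ 2 * ‖φ' r‖ ^ 2 = (r - 2 * M) ^ 2 * ‖φ' r‖ ^ 2
    rw [this]
  rw [hW]
  have hB : 0 ≤ (r' - 2 * M) * ‖φ r'‖ ^ 2 :=
    mul_nonneg (by linarith) (by positivity)
  linarith [hmono]
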